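/- The function q : ℤₚ → ℤₚ defined by q(x) = Σ_{n=0}^∞ n!·C(x,n) is well-defined and continuous, satisfies q(x) = x·q(x−1) + 1 for all x ∈ ℤₚ, and is the unique continuous solution to the recurrence aₙ = n·aₙ₋₁ + 1. -/

import Mathlib

open Filter Polynomial Topology

section Aux

variable {p : ℕ} [Fact p.Prime]

private lemma pow_dvd_fact' (p : ℕ) [Fact p.Prime] (k : ℕ) : p ^ k ∣ (k * p).factorial := by
  induction k with
  | zero => simp
  | succ k ih =>
    have hp : 0 < p := (Fact.out : p.Prime).pos
    have h1 : (k + 1) * p = ((k + 1) * p - 1) + 1 := by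
      have : 0 < (k + 1) * p := by positivity
      omega
    rw [h1, Nat.factorial_succ, ← h1, pow_succ]
    have h2 : k * p ≤ (k + 1) * p - 1 := by nlinarith
    exact mul_comm (p^k) p ▸
      mul_dvd_mul ⟨k+1, mul_comm _ _⟩ (ih.trans (Nat.factorial_dvd_factorial h2))

private lemma norm_fact_le' {k n : ℕ} (h : p ^ k ∣ n) : ‖(n : ℤ_[p])‖ ≤ (p : ℝ) ^ (-(k:ℤ)) := by
  rw [PadicInt.norm_le_pow_iff_mem_span_pow, Ideal.mem_span_singleton]
  exact_mod_cast (Nat.cast_dvd_cast h : ((p^k : ℕ) : ℤ_[p]) ∣ n)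

private lemma fact_tendsto' :
    Tendsto (fun n : ℕ => ((n.factorial : ℤ_[p]))) atTop (𝓝 0) := by
  rw [NormedAddCommGroup.tendsto_nhds_zero]
  intro ε hε
  have hp1 : (1:ℝ) < p := by exact_mod_cast (Fact.out : p.Prime).one_lt
  obtain ⟨k, hk⟩ := exists_pow_lt_of_lt_one hε (inv_lt_one_of_one_lt₀ hp1)
  filter_upwards [eventually_ge_atTop (k * p)] with n hn
  have hdvd : p ^ k ∣ n.factorial :=
    (pow_dvd_fact' p k).trans (Nat.factorial_dvd_factorial hn)
  calc ‖((n.factorial : ℤ_[p]))‖ ≤ (p:ℝ) ^ (-(k:ℤ)) := norm_fact_le' hdvd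
    _ = ((p:ℝ)⁻¹)^k := by rw [zpow_neg, zpow_natCast, inv_pow]
    _ < ε := hk

private lemma term_eq' (n : ℕ) (x : ℤ_[p]) :
    (n.factorial : ℤ_[p]) * Ring.choose x n = aeval x (descPochhammer ℤ n) := by
  rw [aeval_eq_smeval, Ring.descPochhammer_eq_factorial_smul_choose, nsmul_eq_mul]

private lemma norm_term_le' (n : ℕ) (x : ℤ_[p]) :
    ‖(n.factorial : ℤ_[p]) * Ring.choose x n‖ ≤ ‖((n.factorial : ℤ_[p]))‖ := by
  rw [norm_mul]
  exact mul_le_of_le_one_right (norm_nonneg _) (PadicInt.norm_le_one _)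

private lemma summ' (x : ℤ_[p]) :
    Summable (fun n : ℕ => (n.factorial : ℤ_[p]) * Ring.choose x n) := by
  apply NonarchimedeanAddGroup.summable_of_tendsto_cofinite_zero
  rw [Nat.cofinite_eq_atTop, tendsto_zero_iff_norm_tendsto_zero]
  exact squeeze_zero (fun n => norm_nonneg _) (fun n => norm_term_le' n x)
    (tendsto_zero_iff_norm_tendsto_zero.mp (fact_tendsto' (p := p)))

/-- The `n`-th term of the series, as a continuous map. -/
private noncomputable def Fq (p : ℕ) [Fact p.Prime] (n : ℕ) : C(ℤ_[p], ℤ_[p]) :=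
  ⟨fun x => (n.factorial : ℤ_[p]) * Ring.choose x n, by
    simp only [term_eq']; exact (descPochhammer ℤ n).continuous_aeval⟩

private lemma summF' : Summable (Fq p) := by
  apply NonarchimedeanAddGroup.summable_of_tendsto_cofinite_zero
  rw [Nat.cofinite_eq_atTop, tendsto_zero_iff_norm_tendsto_zero]
  refine squeeze_zero (fun n => norm_nonneg _) (fun n => ?_)
    (tendsto_zero_iff_norm_tendsto_zero.mp (fact_tendsto' (p := p)))
  exact (ContinuousMap.norm_le _ (norm_nonneg _)).mpr (fun x => norm_term_le' n x)

private lemma qfun_continuous' :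
    Continuous (fun x : ℤ_[p] => ∑' n : ℕ, (n.factorial : ℤ_[p]) * Ring.choose x n) := by
  have h : (fun x : ℤ_[p] => ∑' n : ℕ, (n.factorial : ℤ_[p]) * Ring.choose x n)
      = ⇑(∑' n, Fq p n) := by
    funext x
    exact ContinuousMap.tsum_apply summF' x
  rw [h]
  exact (∑' n, Fq p n).continuous

private lemma desc_succ' (x : ℤ_[p]) (n : ℕ) :
    aeval x (descPochhammer ℤ (n+1)) = x * aeval (x-1) (descPochhammer ℤ n) := by
  rw [descPochhammer_succ_left, map_mul, aeval_X, aeval_comp, map_sub, aeval_X, map_one]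

private lemma hsD' (x : ℤ_[p]) :
    Summable (fun n : ℕ => aeval x (descPochhammer ℤ n)) := by
  simpa only [term_eq'] using summ' x

private lemma funeq' (x : ℤ_[p]) :
    ∑' n : ℕ, (n.factorial : ℤ_[p]) * Ring.choose x n
      = x * (∑' n : ℕ, (n.factorial : ℤ_[p]) * Ring.choose (x-1) n) + 1 := by
  have h0 : ∀ y : ℤ_[p], (∑' n : ℕ, (n.factorial : ℤ_[p]) * Ring.choose y n)
      = ∑' n : ℕ, aeval y (descPochhammer ℤ n) := fun y => tsum_congr (fun n => term_eq' n y)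
  rw [h0, h0, (hsD' x).tsum_eq_zero_add]
  simp only [desc_succ', descPochhammer_zero, map_one]
  rw [(hsD' (x-1)).tsum_mul_left x]
  ring

private lemma g_zero' (g : ℤ_[p] → ℤ_[p]) (hg : Continuous g)
    (hrec : ∀ n : ℕ, g ((n : ℤ_[p]) + 1) = ((n : ℤ_[p]) + 1) * g (n : ℤ_[p])) (x : ℤ_[p]) :
    g x = 0 := by
  have hnat : ∀ n : ℕ, g (n : ℤ_[p]) = (n.factorial : ℤ_[p]) * g 0 := by
    intro n
    induction n with
    | zero => simp
    | succ n ih =>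
      have : ((n+1 : ℕ) : ℤ_[p]) = (n : ℤ_[p]) + 1 := by push_cast; ring
      rw [this, hrec n, ih]
      push_cast [Nat.factorial_succ]
      ring
  set u : ℕ → ℕ := fun j => x.appr j + j * p ^ j with hu
  have hp : 0 < p := (Fact.out : p.Prime).pos
  have huj : ∀ j, j ≤ u j := fun j => le_trans
    (by calc j = j * 1 := (mul_one j).symm
          _ ≤ j * p ^ j := Nat.mul_le_mul_left j (Nat.one_le_pow _ _ hp))
    (Nat.le_add_left _ _)
  have hdist : ∀ j, ‖x - (u j : ℤ_[p])‖ ≤ (p : ℝ) ^ (-(j:ℤ)) := by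
    intro j
    rw [PadicInt.norm_le_pow_iff_mem_span_pow]
    have h1 : x - (u j : ℤ_[p]) = (x - (x.appr j : ℤ_[p])) - ((j : ℤ_[p]) * (p : ℤ_[p]) ^ j) := by
      push_cast [hu]; ring
    rw [h1]
    exact sub_mem (x.appr_spec j) (Ideal.mem_span_singleton.mpr ⟨j, mul_comm _ _⟩)
  have hlim : Tendsto (fun j => ((u j : ℤ_[p]))) atTop (𝓝 x) := by
    have h2 : Tendsto (fun j => x - (u j : ℤ_[p])) atTop (𝓝 0) := by
      apply squeeze_zero_norm hdist
      have hp1 : (1:ℝ) < p := by exact_mod_cast (Fact.out : p.Prime).one_lt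
      have := tendsto_pow_atTop_nhds_zero_of_lt_one (by positivity)
        (inv_lt_one_of_one_lt₀ hp1)
      simpa only [zpow_neg, zpow_natCast, inv_pow] using this
    have := tendsto_const_nhds (x := x) (f := atTop (α := ℕ)) |>.sub h2
    simpa using this
  have h3 : Tendsto (fun j => g ((u j : ℤ_[p]))) atTop (𝓝 (g x)) :=
    (hg.tendsto x).comp hlim
  have h4 : Tendsto (fun j => g ((u j : ℤ_[p]))) atTop (𝓝 0) := by
    apply squeeze_zero_norm (a := fun j => ‖((j.factorial : ℤ_[p]))‖ * ‖g 0‖)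
    · intro j
      rw [hnat (u j), norm_mul]
      apply mul_le_mul_of_nonneg_right _ (norm_nonneg _)
      obtain ⟨c, hc⟩ := Nat.factorial_dvd_factorial (huj j)
      rw [hc]
      push_cast
      rw [norm_mul]
      exact mul_le_of_le_one_right (norm_nonneg _) (PadicInt.norm_le_one _)
    · have := (tendsto_zero_iff_norm_tendsto_zero.mp (fact_tendsto' (p := p))).mul_const ‖g 0‖
      simpa using this
  exact tendsto_nhds_unique h3 h4

end Aux

/-- The function `q(x) = Σ_{n=0}^∞ n!·C(x,n) : ℤ_[p] → ℤ_[p]`, with the binomial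
coefficient `C(x,n)` realized by `Ring.choose`. -/
noncomputable def qfun (p : ℕ) [Fact p.Prime] (x : ℤ_[p]) : ℤ_[p] :=
  ∑' n : ℕ, (n.factorial : ℤ_[p]) * Ring.choose x n

/-- `q(x) = Σ n!·C(x,n)` is well-defined (the series is summable)
and continuous, satisfies `q(x) = x·q(x-1) + 1` for all `x ∈ ℤ_[p]`, and is the
unique continuous solution to the recurrence `aₙ = n·aₙ₋₁ + 1`. -/
theorem stmt_10 (p : ℕ) [Fact p.Prime] :
    (∀ x : ℤ_[p], Summable (fun n : ℕ => (n.factorial : ℤ_[p]) * Ring.choose x n)) ∧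
    Continuous (qfun p) ∧
    (∀ x : ℤ_[p], qfun p x = x * qfun p (x - 1) + 1) ∧
    (∀ f : ℤ_[p] → ℤ_[p], Continuous f →
      (∀ n : ℕ, f ((n : ℤ_[p]) + 1) = ((n : ℤ_[p]) + 1) * f (n : ℤ_[p]) + 1) →
      f = qfun p) := by
  have hcont : Continuous (qfun p) := qfun_continuous'
  have hfe : ∀ x : ℤ_[p], qfun p x = x * qfun p (x - 1) + 1 := fun x => funeq' x
  refine ⟨fun x => summ' x, hcont, hfe, ?_⟩
  intro f hf hrec
  have hqrec : ∀ n : ℕ, qfun p ((n : ℤ_[p]) + 1) = ((n : ℤ_[p]) + 1) * qfun p (n : ℤ_[p]) + 1 := by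
    intro n
    have := hfe ((n : ℤ_[p]) + 1)
    rwa [add_sub_cancel_right] at this
  have hg : ∀ x : ℤ_[p], f x - qfun p x = 0 := by
    apply g_zero' _ (hf.sub hcont)
    intro n
    rw [Pi.sub_apply, Pi.sub_apply, hrec n, hqrec n]
    ring
  funext x
  have := hg x
  linear_combination this
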